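/- Let H be a real Hilbert space, I a closed subspace of H of finite codimension, F = I^⊥, and set I₀ = I × {0} ⊆ S(H) = H × H. Let L be a Lagrangian subspace of S(H) with L ∩ I₀ = {0} and L + I₀ closed. Then the symplectic reduction L_{I₀} = {(P_F x, y) : (x,y) ∈ L, y ∈ F} is a Lagrangian subspace of the finite-dimensional symplectic space F × F. -/

import Mathlib

open RealInnerProductSpace

noncomputable section SympAux
variable {H : Type*} [NormedAddCommGroup H] [InnerProductSpace ℝ H]

/-- The Hilbert space `H × H` with the `L²` norm. -/
abbrev SymE (H : Type*) [NormedAddCommGroup H] [InnerProductSpace ℝ H] :=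
  WithLp 2 (H × H)

def toE (q : H × H) : SymE H := (WithLp.equiv 2 (H × H)).symm q

@[simp] lemma toE_fst (q : H × H) : (toE q).fst = q.1 := rfl
@[simp] lemma toE_snd (q : H × H) : (toE q).snd = q.2 := rfl

def eL : SymE H ≃ₗ[ℝ] H × H :=
  (WithLp.prodContinuousLinearEquiv 2 ℝ H H).toLinearEquiv

@[simp] lemma eL_apply (x : SymE H) : eL x = (x.fst, x.snd) := rfl
@[simp] lemma eL_symm_apply (q : H × H) : eL.symm q = toE q := rfl

def liftS (A : Submodule ℝ (H × H)) : Submodule ℝ (SymE H) :=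
  A.map ((eL.symm : (H × H) ≃ₗ[ℝ] SymE H) : (H × H) →ₗ[ℝ] SymE H)

lemma liftS_eq_comap (A : Submodule ℝ (H × H)) :
    liftS A = A.comap ((eL : SymE H ≃ₗ[ℝ] H × H) : SymE H →ₗ[ℝ] H × H) := by
  rw [liftS, Submodule.map_equiv_eq_comap_symm]
  rfl

lemma mem_liftS {A : Submodule ℝ (H × H)} {x : SymE H} :
    x ∈ liftS A ↔ (x.fst, x.snd) ∈ A := by
  rw [liftS_eq_comap]; rfl

lemma liftS_sup (A B : Submodule ℝ (H × H)) :
    liftS (A ⊔ B) = liftS A ⊔ liftS B := Submodule.map_sup _ _ _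

lemma liftS_inf (A B : Submodule ℝ (H × H)) :
    liftS (A ⊓ B) = liftS A ⊓ liftS B := by
  simp only [liftS_eq_comap, Submodule.comap_inf]

lemma liftS_mono {A B : Submodule ℝ (H × H)} (h : A ≤ B) : liftS A ≤ liftS B :=
  Submodule.map_mono h

lemma isClosed_liftS {A : Submodule ℝ (H × H)} (h : IsClosed (A : Set (H × H))) :
    IsClosed ((liftS A : Submodule ℝ (SymE H)) : Set (SymE H)) := by
  have : ((liftS A : Submodule ℝ (SymE H)) : Set (SymE H)) =
      (WithLp.prodContinuousLinearEquiv 2 ℝ H H) ⁻¹' (A : Set (H × H)) := by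
    ext x
    simp only [SetLike.mem_coe, mem_liftS, Set.mem_preimage]
    rfl
  rw [this]
  exact h.preimage (WithLp.prodContinuousLinearEquiv 2 ℝ H H).continuous

/-- The "symplectic rotation" `(u,v) ↦ (-v,u)` as a linear isometry of `SymE H`. -/
def TS : SymE H ≃ₗᵢ[ℝ] SymE H :=
  LinearEquiv.isometryOfInner
    ((eL : SymE H ≃ₗ[ℝ] H × H).trans
      (((LinearEquiv.prodComm ℝ H H).trans
        ((LinearEquiv.neg ℝ).prodCongr (LinearEquiv.refl ℝ H))).trans eL.symm))
    (by
      intro x y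
      show (inner ℝ (toE (-x.snd, x.fst)) (toE (-y.snd, y.fst)) : ℝ) = inner ℝ x y
      rw [WithLp.prod_inner_apply, WithLp.prod_inner_apply]
      show (⟪-x.snd, -y.snd⟫ : ℝ) + ⟪x.fst, y.fst⟫ = (⟪x.fst, y.fst⟫ : ℝ) + ⟪x.snd, y.snd⟫
      rw [inner_neg_neg]; ring)

@[simp] lemma TS_fst (x : SymE H) : ((TS x : SymE H)).fst = -(x.snd) := rfl
@[simp] lemma TS_snd (x : SymE H) : ((TS x : SymE H)).snd = x.fst := rfl
@[simp] lemma TS_symm_fst (x : SymE H) : ((TS.symm x : SymE H)).fst = x.snd := rfl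
@[simp] lemma TS_symm_snd (x : SymE H) : ((TS.symm x : SymE H)).snd = -(x.fst) := rfl

lemma TS_toLinearEquiv_apply (x : SymE H) :
    (TS.toLinearEquiv : SymE H ≃ₗ[ℝ] SymE H) x = TS x := rfl
lemma TS_toLinearEquiv_symm_apply (x : SymE H) :
    (TS.toLinearEquiv : SymE H ≃ₗ[ℝ] SymE H).symm x = TS.symm x := rfl

lemma inner_TS (q : H × H) (u : SymE H) :
    (inner ℝ u (TS (toE q)) : ℝ) = -((⟪q.2, u.fst⟫ : ℝ) - ⟪q.1, u.snd⟫) := by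
  rw [WithLp.prod_inner_apply]
  show (⟪u.fst, -q.2⟫ : ℝ) + ⟪u.snd, q.1⟫ = _
  rw [inner_neg_right, real_inner_comm u.fst, real_inner_comm u.snd]
  ring

lemma mem_ann_iff (A : Submodule ℝ (H × H)) (q : H × H) :
    (∀ p ∈ A, (⟪q.2, p.1⟫ - ⟪q.1, p.2⟫ : ℝ) = 0) ↔ TS (toE q) ∈ (liftS A)ᗮ := by
  rw [Submodule.mem_orthogonal]
  constructor
  · intro h u hu
    rw [inner_TS, h (u.fst, u.snd) (mem_liftS.mp hu), neg_zero]
  · intro h p hp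
    have := h (toE p) (mem_liftS.mpr hp)
    rw [inner_TS] at this
    show (⟪q.2, (toE p).fst⟫ - ⟪q.1, (toE p).snd⟫ : ℝ) = 0
    linarith

lemma map_TS_liftS_prod (A B : Submodule ℝ H) :
    Submodule.map ((TS.toLinearEquiv : SymE H ≃ₗ[ℝ] SymE H) : SymE H →ₗ[ℝ] SymE H)
      (liftS (A.prod B)) = liftS (B.prod A) := by
  ext x
  rw [Submodule.mem_map_equiv, mem_liftS, mem_liftS]
  show (x.snd, -x.fst) ∈ A.prod B ↔ _
  simp only [Submodule.mem_prod]
  rw [neg_mem_iff]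
  tauto

lemma orth_liftS_prod (A B : Submodule ℝ H) :
    (liftS (A.prod B))ᗮ = liftS (Aᗮ.prod Bᗮ) := by
  ext x
  rw [Submodule.mem_orthogonal, mem_liftS, Submodule.mem_prod]
  constructor
  · intro h
    constructor
    · rw [Submodule.mem_orthogonal]
      intro a ha
      have := h (toE (a, 0)) (mem_liftS.mpr (by simp [Submodule.mem_prod, ha]))
      rw [WithLp.prod_inner_apply] at this
      simpa using this
    · rw [Submodule.mem_orthogonal]
      intro b hb
      have := h (toE (0, b)) (mem_liftS.mpr (by simp [Submodule.mem_prod, hb]))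
      rw [WithLp.prod_inner_apply] at this
      simpa using this
  · rintro ⟨h1, h2⟩ u hu
    rw [mem_liftS, Submodule.mem_prod] at hu
    rw [WithLp.prod_inner_apply]
    simp only [WithLp.ofLp_fst, WithLp.ofLp_snd]
    rw [(Submodule.mem_orthogonal _ _).mp h1 u.fst hu.1,
      (Submodule.mem_orthogonal _ _).mp h2 u.snd hu.2, add_zero]

lemma isClosed_map_TS {X : Submodule ℝ (SymE H)} (h : IsClosed (X : Set (SymE H))) :
    IsClosed ((Submodule.map ((TS.toLinearEquiv : SymE H ≃ₗ[ℝ] SymE H) : SymE H →ₗ[ℝ] SymE H) X :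
      Submodule ℝ (SymE H)) : Set (SymE H)) := by
  have : ((Submodule.map ((TS.toLinearEquiv : SymE H ≃ₗ[ℝ] SymE H) : SymE H →ₗ[ℝ] SymE H) X :
      Submodule ℝ (SymE H)) : Set (SymE H)) = (TS.symm : SymE H → SymE H) ⁻¹' (X : Set (SymE H)) := by
    ext x
    simp only [SetLike.mem_coe, Submodule.mem_map_equiv, Set.mem_preimage]
    rfl
  rw [this]
  exact h.preimage TS.symm.continuous

lemma map_TS_inf (X Y : Submodule ℝ (SymE H)) :
    Submodule.map ((TS.toLinearEquiv : SymE H ≃ₗ[ℝ] SymE H) : SymE H →ₗ[ℝ] SymE H) (X ⊓ Y) =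
      Submodule.map ((TS.toLinearEquiv : SymE H ≃ₗ[ℝ] SymE H) : SymE H →ₗ[ℝ] SymE H) X ⊓
      Submodule.map ((TS.toLinearEquiv : SymE H ≃ₗ[ℝ] SymE H) : SymE H →ₗ[ℝ] SymE H) Y := by
  simp only [Submodule.map_equiv_eq_comap_symm, Submodule.comap_inf]

end SympAux
open RealInnerProductSpace

set_option synthInstance.maxHeartbeats 1000000
set_option maxHeartbeats 1000000

theorem statement14 {H : Type*} [NormedAddCommGroup H] [InnerProductSpace ℝ H] [CompleteSpace H]
    (I : Submodule ℝ H) (hIc : IsClosed (I : Set H))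
    (hcof : FiniteDimensional ℝ ↥Iᗮ)
    (L : Submodule ℝ (H × H))
    (hLc : IsClosed (L : Set (H × H)))
    (hLag : (L : Set (H × H)) =
      {q | ∀ p ∈ L, (⟪q.2, p.1⟫ - ⟪q.1, p.2⟫ : ℝ) = 0})
    (hclean₁ : L ⊓ I.prod ⊥ = ⊥)
    (hclean₂ : IsClosed ((L ⊔ I.prod ⊥ : Submodule ℝ (H × H)) : Set (H × H))) :
    ∃ M : Submodule ℝ (H × H),
      (M : Set (H × H)) =
        {q | ∃ p ∈ L, p.2 ∈ Iᗮ ∧ q = (((Iᗮ.orthogonalProjectionOnto p.1 : H), p.2) : H × H)} ∧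
      M ≤ Iᗮ.prod Iᗮ ∧
      (M : Set (H × H)) =
        {q | q ∈ Iᗮ.prod Iᗮ ∧ ∀ p ∈ M, (⟪q.2, p.1⟫ - ⟪q.1, p.2⟫ : ℝ) = 0} := by
  classical
  haveI : CompleteSpace I := hIc.completeSpace_coe
  have hIorth : Iᗮᗮ = I := Submodule.orthogonal_orthogonal I
  -- the orthogonal projection onto `F = Iᗮ` as a linear endomorphism of `H`
  set PF : H →ₗ[ℝ] H :=
    Iᗮ.subtype ∘ₗ (Iᗮ.orthogonalProjectionOnto : H →L[ℝ] Iᗮ).toLinearMap with hPFdef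
  have hPF_apply : ∀ x : H, PF x = (Iᗮ.orthogonalProjectionOnto x : H) := fun _ => rfl
  have hPF_memF : ∀ x : H, PF x ∈ Iᗮ := fun x => (Iᗮ.orthogonalProjectionOnto x).2
  have hPF_self : ∀ x, x ∈ Iᗮ → PF x = x := by
    intro x hx
    rw [hPF_apply]
    exact congrArg Subtype.val
      (Submodule.orthogonalProjectionOnto_mem_subspace_eq_self (⟨x, hx⟩ : Iᗮ))
  have hPF_zero : ∀ i ∈ I, PF i = 0 := by
    intro i hi
    rw [hPF_apply, Submodule.orthogonalProjectionOnto_apply_of_mem_orthogonal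
      (Submodule.le_orthogonal_orthogonal I hi), Submodule.coe_zero]
  have hPF_inner : ∀ (x b : H), b ∈ Iᗮ → (⟪b, PF x⟫ : ℝ) = ⟪b, x⟫ := by
    intro x b hb
    have h0 : (⟪b, x - PF x⟫ : ℝ) = 0 :=
      (Submodule.mem_orthogonal _ _).mp (Iᗮ.sub_starProjection_mem_orthogonal x) b hb
    rw [inner_sub_right] at h0
    linarith
  set G : (H × H) →ₗ[ℝ] (H × H) := PF.prodMap (LinearMap.id : H →ₗ[ℝ] H) with hGdef
  have hG_apply : ∀ w : H × H, G w = (PF w.1, w.2) := fun _ => rfl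
  set W : Submodule ℝ (H × H) := (L ⊔ I.prod ⊥) ⊓ (⊤ : Submodule ℝ H).prod Iᗮ with hWdef
  have hWmem : ∀ w : H × H, w ∈ W ↔ w ∈ L ⊔ I.prod ⊥ ∧ w.2 ∈ Iᗮ := by
    intro w
    rw [hWdef, Submodule.mem_inf, Submodule.mem_prod]
    simp
  -- L is isotropic
  have hLiso : ∀ l ∈ L, ∀ p ∈ L, (⟪l.2, p.1⟫ - ⟪l.1, p.2⟫ : ℝ) = 0 := by
    intro l hl
    have hl' : l ∈ (L : Set (H × H)) := hl
    rw [hLag] at hl'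
    exact hl'
  -- W is isotropic
  have hWiso : ∀ w ∈ W, ∀ u ∈ W, (⟪w.2, u.1⟫ - ⟪w.1, u.2⟫ : ℝ) = 0 := by
    intro w hw u hu
    obtain ⟨hw1, hw2⟩ := (hWmem w).mp hw
    obtain ⟨hu1, hu2⟩ := (hWmem u).mp hu
    obtain ⟨l, hl, m, hm, rfl⟩ := Submodule.mem_sup.mp hw1
    obtain ⟨l', hl', m', hm', rfl⟩ := Submodule.mem_sup.mp hu1
    rw [Submodule.mem_prod] at hm hm'
    have hm2 : m.2 = 0 := (Submodule.mem_bot ℝ).mp hm.2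
    have hm2' : m'.2 = 0 := (Submodule.mem_bot ℝ).mp hm'.2
    have hl2F : l.2 ∈ Iᗮ := by
      have h : (l + m).2 = l.2 := by rw [Prod.snd_add, hm2, add_zero]
      rwa [h] at hw2
    have hl2F' : l'.2 ∈ Iᗮ := by
      have h : (l' + m').2 = l'.2 := by rw [Prod.snd_add, hm2', add_zero]
      rwa [h] at hu2
    have z1 : (⟪l.2, m'.1⟫ : ℝ) = 0 := by
      rw [real_inner_comm]
      exact (Submodule.mem_orthogonal I l.2).mp hl2F m'.1 hm'.1
    have z2 : (⟪m.1, l'.2⟫ : ℝ) = 0 :=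
      (Submodule.mem_orthogonal I l'.2).mp hl2F' m.1 hm.1
    have hL0 := hLiso l hl l' hl'
    show (⟪(l + m).2, (l' + m').1⟫ - ⟪(l + m).1, (l' + m').2⟫ : ℝ) = 0
    rw [Prod.snd_add, Prod.fst_add, Prod.snd_add, Prod.fst_add, hm2, hm2', add_zero, add_zero,
      inner_add_right, inner_add_left]
    linarith
  -- closedness facts
  have hBclosed : IsClosed ((((⊤ : Submodule ℝ H).prod Iᗮ : Submodule ℝ (H × H)) :
      Set (H × H))) := by
    have h : ((((⊤ : Submodule ℝ H).prod Iᗮ : Submodule ℝ (H × H)) : Set (H × H))) =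
        Set.univ ×ˢ (Iᗮ : Set H) := by
      ext x
      simp [Submodule.mem_prod, Set.mem_prod]
    rw [h]
    exact isClosed_univ.prod I.isClosed_orthogonal
  have hWclosed : IsClosed ((W : Submodule ℝ (H × H)) : Set (H × H)) := by
    rw [hWdef]
    exact hclean₂.inter hBclosed
  -- lifted subspaces
  have hAc := isClosed_liftS (H := H) hclean₂
  have hBc := isClosed_liftS (H := H) hBclosed
  haveI hA_cs : CompleteSpace (liftS (L ⊔ I.prod ⊥) : Submodule ℝ (SymE H)) :=
    hAc.completeSpace_coe
  haveI hB_cs : CompleteSpace (liftS ((⊤ : Submodule ℝ H).prod Iᗮ) : Submodule ℝ (SymE H)) :=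
    hBc.completeSpace_coe
  -- Lagrangian condition for the lifted L
  have hlagS : (liftS L)ᗮ =
      Submodule.map ((TS.toLinearEquiv : SymE H ≃ₗ[ℝ] SymE H) : SymE H →ₗ[ℝ] SymE H)
        (liftS L) := by
    ext x
    rw [Submodule.mem_map_equiv]
    have hx : TS (toE ((x.snd : H), -x.fst)) = x := by
      apply (WithLp.equiv 2 (H × H)).injective
      refine Prod.ext ?_ ?_
      · show -(-x.fst) = x.fst
        exact neg_neg x.fst
      · rfl
    constructor
    · intro hxo
      rw [mem_liftS]
      have hq : ((x.snd, -x.fst) : H × H) ∈ (L : Set (H × H)) := by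
        rw [hLag]
        refine (mem_ann_iff L ((x.snd, -x.fst) : H × H)).mpr ?_
        rw [hx]
        exact hxo
      exact hq
    · intro hxm
      rw [mem_liftS] at hxm
      have h2 : ((x.snd, -x.fst) : H × H) ∈ (L : Set (H × H)) := hxm
      rw [hLag] at h2
      have := (mem_ann_iff L ((x.snd, -x.fst) : H × H)).mp h2
      rwa [hx] at this
  -- the two orthogonal complements
  have hAo : (liftS (L ⊔ I.prod ⊥) : Submodule ℝ (SymE H))ᗮ =
      Submodule.map ((TS.toLinearEquiv : SymE H ≃ₗ[ℝ] SymE H) : SymE H →ₗ[ℝ] SymE H)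
        (liftS L ⊓ liftS ((⊤ : Submodule ℝ H).prod Iᗮ)) := by
    rw [liftS_sup, ← Submodule.inf_orthogonal, hlagS, orth_liftS_prod,
      Submodule.bot_orthogonal_eq_top, ← map_TS_liftS_prod (⊤ : Submodule ℝ H) Iᗮ,
      ← map_TS_inf]
  have hBo : (liftS ((⊤ : Submodule ℝ H).prod Iᗮ) : Submodule ℝ (SymE H))ᗮ =
      Submodule.map ((TS.toLinearEquiv : SymE H ≃ₗ[ℝ] SymE H) : SymE H →ₗ[ℝ] SymE H)
        (liftS (I.prod ⊥)) := by
    rw [orth_liftS_prod, Submodule.top_orthogonal_eq_bot, hIorth]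
    exact (map_TS_liftS_prod I ⊥).symm
  have hWsplit : (liftS W : Submodule ℝ (SymE H)) =
      liftS (L ⊔ I.prod ⊥) ⊓ liftS ((⊤ : Submodule ℝ H).prod Iᗮ) := by
    rw [hWdef]; exact liftS_inf _ _
  have hWcS : IsClosed ((liftS W : Submodule ℝ (SymE H)) : Set (SymE H)) :=
    isClosed_liftS hWclosed
  -- modular law
  have hmod : (liftS L ⊓ liftS ((⊤ : Submodule ℝ H).prod Iᗮ)) ⊔ liftS (I.prod ⊥) =
      (liftS W : Submodule ℝ (SymE H)) := by
    have hle : (liftS (I.prod ⊥) : Submodule ℝ (SymE H)) ≤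
        liftS ((⊤ : Submodule ℝ H).prod Iᗮ) := by
      refine liftS_mono ?_
      intro x hx
      rw [Submodule.mem_prod] at hx ⊢
      refine ⟨trivial, ?_⟩
      rw [(Submodule.mem_bot ℝ).mp hx.2]
      exact zero_mem _
    rw [hWsplit, liftS_sup, sup_comm (liftS L) (liftS (I.prod ⊥)),
      sup_inf_assoc_of_le _ hle, sup_comm]
  -- the key identity : (liftS W)ᗮ = TS (liftS W)
  have hWo : (liftS W : Submodule ℝ (SymE H))ᗮ =
      Submodule.map ((TS.toLinearEquiv : SymE H ≃ₗ[ℝ] SymE H) : SymE H →ₗ[ℝ] SymE H)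
        (liftS W) := by
    have h1 : (liftS W : Submodule ℝ (SymE H)) =
        ((liftS (L ⊔ I.prod ⊥) : Submodule ℝ (SymE H))ᗮ ⊔
          (liftS ((⊤ : Submodule ℝ H).prod Iᗮ) : Submodule ℝ (SymE H))ᗮ)ᗮ := by
      rw [← Submodule.inf_orthogonal, Submodule.orthogonal_orthogonal,
        Submodule.orthogonal_orthogonal, ← hWsplit]
    have h2 : ((liftS (L ⊔ I.prod ⊥) : Submodule ℝ (SymE H))ᗮ ⊔
          (liftS ((⊤ : Submodule ℝ H).prod Iᗮ) : Submodule ℝ (SymE H))ᗮ) =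
        Submodule.map ((TS.toLinearEquiv : SymE H ≃ₗ[ℝ] SymE H) : SymE H →ₗ[ℝ] SymE H)
          (liftS W) := by
      rw [hAo, hBo, ← Submodule.map_sup, hmod]
    calc (liftS W : Submodule ℝ (SymE H))ᗮ
        = (((liftS (L ⊔ I.prod ⊥) : Submodule ℝ (SymE H))ᗮ ⊔
            (liftS ((⊤ : Submodule ℝ H).prod Iᗮ) : Submodule ℝ (SymE H))ᗮ)ᗮ)ᗮ := by
          rw [← h1]
      _ = ((liftS (L ⊔ I.prod ⊥) : Submodule ℝ (SymE H))ᗮ ⊔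
            (liftS ((⊤ : Submodule ℝ H).prod Iᗮ) : Submodule ℝ (SymE H))ᗮ).topologicalClosure :=
          Submodule.orthogonal_orthogonal_eq_closure _
      _ = (Submodule.map ((TS.toLinearEquiv : SymE H ≃ₗ[ℝ] SymE H) : SymE H →ₗ[ℝ] SymE H)
            (liftS W)).topologicalClosure := by rw [h2]
      _ = Submodule.map ((TS.toLinearEquiv : SymE H ≃ₗ[ℝ] SymE H) : SymE H →ₗ[ℝ] SymE H)
            (liftS W) :=
          IsClosed.submodule_topologicalClosure_eq (isClosed_map_TS hWcS)
  -- the coisotropy of W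
  have hW_ann : ∀ q : H × H, (∀ p ∈ W, (⟪q.2, p.1⟫ - ⟪q.1, p.2⟫ : ℝ) = 0) → q ∈ W := by
    intro q hq
    have h1 : TS (toE q) ∈ (liftS W : Submodule ℝ (SymE H))ᗮ := (mem_ann_iff W q).mp hq
    rw [hWo, Submodule.mem_map_equiv] at h1
    have h2 : toE q ∈ (liftS W : Submodule ℝ (SymE H)) := by
      have heq : (TS.toLinearEquiv : SymE H ≃ₗ[ℝ] SymE H).symm (TS (toE q)) = toE q :=
        TS.symm_apply_apply _
      rwa [heq] at h1
    exact mem_liftS.mp h2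
  -- membership description of the reduction
  have hM1mem : ∀ q : H × H, q ∈ W.map G ↔
      ∃ p ∈ L, p.2 ∈ Iᗮ ∧ q = (((Iᗮ.orthogonalProjectionOnto p.1 : H), p.2) : H × H) := by
    intro q
    constructor
    · intro hq
      obtain ⟨w, hw, rfl⟩ := Submodule.mem_map.mp hq
      obtain ⟨hw1, hw2⟩ := (hWmem w).mp hw
      obtain ⟨l, hl, m, hm, rfl⟩ := Submodule.mem_sup.mp hw1
      rw [Submodule.mem_prod] at hm
      have hm2 : m.2 = 0 := (Submodule.mem_bot ℝ).mp hm.2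
      have hsnd : (l + m).2 = l.2 := by rw [Prod.snd_add, hm2, add_zero]
      refine ⟨l, hl, by rwa [hsnd] at hw2, ?_⟩
      rw [hG_apply]
      have h1 : PF ((l + m).1) = (Iᗮ.orthogonalProjectionOnto l.1 : H) := by
        rw [Prod.fst_add, map_add, hPF_zero m.1 hm.1, add_zero, hPF_apply]
      rw [h1, hsnd]
    · rintro ⟨p, hp, hp2, rfl⟩
      refine Submodule.mem_map.mpr ⟨p, (hWmem p).mpr ⟨Submodule.mem_sup_left hp, hp2⟩, ?_⟩
      rw [hG_apply, hPF_apply]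
  have hMle : W.map G ≤ Iᗮ.prod Iᗮ := by
    intro q hq
    obtain ⟨p, _, hp2, rfl⟩ := (hM1mem q).mp hq
    rw [Submodule.mem_prod]
    exact ⟨(Iᗮ.orthogonalProjectionOnto p.1).2, hp2⟩
  refine ⟨W.map G, Set.ext fun q => by simpa using hM1mem q, hMle, ?_⟩
  ext q
  simp only [SetLike.mem_coe, Set.mem_setOf_eq]
  constructor
  · intro hq
    refine ⟨hMle hq, ?_⟩
    intro p hp
    obtain ⟨l, hl, hl2, rfl⟩ := (hM1mem q).mp hq
    obtain ⟨l', hl', hl'2, rfl⟩ := (hM1mem p).mp hp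
    show (⟪l.2, (Iᗮ.orthogonalProjectionOnto l'.1 : H)⟫ -
      ⟪(Iᗮ.orthogonalProjectionOnto l.1 : H), l'.2⟫ : ℝ) = 0
    have a1 : (⟪l.2, (Iᗮ.orthogonalProjectionOnto l'.1 : H)⟫ : ℝ) = ⟪l.2, l'.1⟫ := by
      rw [← hPF_apply]
      exact hPF_inner l'.1 l.2 hl2
    have a2 : (⟪(Iᗮ.orthogonalProjectionOnto l.1 : H), l'.2⟫ : ℝ) = ⟪l.1, l'.2⟫ := by
      rw [← hPF_apply, real_inner_comm, hPF_inner l.1 l'.2 hl'2, real_inner_comm]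
    rw [a1, a2]
    exact hLiso l hl l' hl'
  · rintro ⟨hqF, hann⟩
    rw [Submodule.mem_prod] at hqF
    have hannW : ∀ p ∈ W, (⟪q.2, p.1⟫ - ⟪q.1, p.2⟫ : ℝ) = 0 := by
      intro p hp
      have h0 := hann (G p) (Submodule.mem_map_of_mem hp)
      have e1 : (⟪q.2, (G p).1⟫ : ℝ) = ⟪q.2, p.1⟫ := by
        rw [hG_apply]
        exact hPF_inner p.1 q.2 hqF.2
      have e2 : (⟪q.1, (G p).2⟫ : ℝ) = ⟪q.1, p.2⟫ := by rw [hG_apply]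
      rw [e1, e2] at h0
      exact h0
    have hqW : q ∈ W := hW_ann q hannW
    have hGq : G q = q := by
      rw [hG_apply, hPF_self q.1 hqF.1]
    exact Submodule.mem_map.mpr ⟨q, hqW, hGq⟩
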